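/- Let κ, λ, μ > 0 and define φ̄ : ℝ → ℝ by φ̄(t) = (μ/(μ+λ)) κ e^{λt} for t ≤ 0 and φ̄(t) = κ(1 − (λ/(μ+λ)) e^{−μt}) for t > 0. Then φ̄ is non-decreasing on ℝ, lim_{t→−∞} φ̄(t) = 0, lim_{t→+∞} φ̄(t) = κ, and for every s > 0 the function t ↦ e^{μt}(φ̄(t+s) − φ̄(t)) is non-decreasing on ℝ. -/

import Mathlib

open Real Filter

/-- The upper solution `φ̄(t) = (μ/(μ+λ))κe^{λt}` for `t ≤ 0`,
`φ̄(t) = κ(1 − (λ/(μ+λ))e^{−μt})` for `t > 0`, belongs to the profile set `Γ`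
with weight `β = μ`. -/
theorem upper_solution_in_profile_set
    (κ lam μ : ℝ) (hκ : 0 < κ) (hlam : 0 < lam) (hμ : 0 < μ)
    (φb : ℝ → ℝ)
    (hφb : ∀ t : ℝ, φb t =
      if t ≤ 0 then μ / (μ + lam) * κ * Real.exp (lam * t)
      else κ * (1 - lam / (μ + lam) * Real.exp (-μ * t))) :
    Monotone φb ∧
      Tendsto φb atBot (nhds 0) ∧ Tendsto φb atTop (nhds κ) ∧
      ∀ s : ℝ, 0 < s →
        Monotone fun t : ℝ => Real.exp (μ * t) * (φb (t + s) - φb t) := by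
  set ν : ℝ := μ + lam with hν_def
  have hν : 0 < ν := by positivity
  set c : ℝ := μ / ν * κ with hc_def
  set d : ℝ := lam / ν * κ with hd_def
  have hc : 0 < c := by positivity
  have hd : 0 < d := by positivity
  have hcd : c + d = κ := by
    rw [hc_def, hd_def, hν_def]
    field_simp
  -- formulas on each side
  have hle : ∀ t : ℝ, t ≤ 0 → φb t = c * Real.exp (lam * t) := by
    intro t ht; rw [hφb t, if_pos ht]
  have hge : ∀ t : ℝ, 0 ≤ t → φb t = κ - d * Real.exp (-μ * t) := by
    intro t ht
    rcases eq_or_lt_of_le ht with h0 | h0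
    · rw [hφb t, if_pos h0.symm.le, ← h0]
      simp only [mul_zero, neg_zero, Real.exp_zero, mul_one]
      linarith [hcd]
    · rw [hφb t, if_neg (not_le.2 h0), hd_def]
      ring
  -- Monotonicity of φb
  have hmono : Monotone φb := by
    intro a b hab
    rcases le_or_gt a 0 with ha | ha
    · rcases le_or_gt b 0 with hb | hb
      · rw [hle a ha, hle b hb]
        have := Real.exp_le_exp.2 (mul_le_mul_of_nonneg_left hab hlam.le)
        nlinarith
      · rw [hle a ha, hge b hb.le]
        have h1 : Real.exp (lam * a) ≤ 1 := by
          rw [← Real.exp_zero]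
          exact Real.exp_le_exp.2 (by nlinarith)
        have h2 : Real.exp (-μ * b) ≤ 1 := by
          rw [← Real.exp_zero]
          exact Real.exp_le_exp.2 (by nlinarith)
        nlinarith [hcd]
    · have hb : 0 < b := lt_of_lt_of_le ha hab
      rw [hge a ha.le, hge b hb.le]
      have := Real.exp_le_exp.2 (show -μ * b ≤ -μ * a by nlinarith)
      nlinarith
  refine ⟨hmono, ?_, ?_, ?_⟩
  · -- atBot
    have h1 : Tendsto (fun t : ℝ => c * Real.exp (lam * t)) atBot (nhds 0) := by
      have h2 : Tendsto (fun t : ℝ => lam * t) atBot atBot :=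
        tendsto_id.const_mul_atBot hlam
      have := (Real.tendsto_exp_atBot.comp h2).const_mul c
      simpa using this
    refine h1.congr' ?_
    filter_upwards [eventually_le_atBot (0 : ℝ)] with t ht
    exact (hle t ht).symm
  · -- atTop
    have h1 : Tendsto (fun t : ℝ => κ - d * Real.exp (-μ * t)) atTop (nhds κ) := by
      have h2 : Tendsto (fun t : ℝ => -μ * t) atTop atBot :=
        tendsto_id.const_mul_atTop_of_neg (by linarith)
      have h3 := ((Real.tendsto_exp_atBot.comp h2).const_mul d).const_sub κ
      simpa using h3
    refine h1.congr' ?_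
    filter_upwards [eventually_ge_atTop (0 : ℝ)] with t ht
    exact (hge t ht).symm
  · -- the weighted increment is nondecreasing
    intro s hs
    set g : ℝ → ℝ := fun t => Real.exp (μ * t) * (φb (t + s) - φb t) with hg_def
    -- formulas for g on the three regions
    have hg1 : ∀ t : ℝ, t ≤ -s → g t = c * (Real.exp (lam * s) - 1) * Real.exp (ν * t) := by
      intro t ht
      have hts : t + s ≤ 0 := by linarith
      have htt : t ≤ 0 := by linarith
      simp only [hg_def, hle _ hts, hle _ htt]
      rw [show lam * (t + s) = lam * t + lam * s by ring, Real.exp_add,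
        show ν * t = μ * t + lam * t by rw [hν_def]; ring, Real.exp_add]
      ring
    have hg2 : ∀ t : ℝ, -s ≤ t → t ≤ 0 →
        g t = κ * Real.exp (μ * t) - c * Real.exp (ν * t) - d * Real.exp (-μ * s) := by
      intro t ht1 ht2
      have hts : 0 ≤ t + s := by linarith
      simp only [hg_def, hge _ hts, hle _ ht2]
      rw [show -μ * (t + s) = -(μ * t) + -μ * s by ring, Real.exp_add,
        show ν * t = μ * t + lam * t by rw [hν_def]; ring, Real.exp_add]
      have hexp : Real.exp (μ * t) * Real.exp (-(μ * t)) = 1 := by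
        rw [← Real.exp_add]; simp
      linear_combination (-(d * Real.exp (-μ * s))) * hexp
    have hg3 : ∀ t : ℝ, 0 ≤ t → g t = d * (1 - Real.exp (-μ * s)) := by
      intro t ht
      have hts : 0 ≤ t + s := by linarith
      simp only [hg_def, hge _ hts, hge _ ht]
      rw [show -μ * (t + s) = -μ * t + -μ * s by ring, Real.exp_add]
      have hexp : Real.exp (μ * t) * Real.exp (-μ * t) = 1 := by
        rw [← Real.exp_add]; simp
      linear_combination (d * (1 - Real.exp (-μ * s))) * hexp
    -- monotone on the middle region via derivatives
    have hmid : MonotoneOn (fun t : ℝ => κ * Real.exp (μ * t) - c * Real.exp (ν * t))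
        (Set.Iic (0 : ℝ)) := by
      have hder : ∀ t : ℝ, HasDerivAt (fun t : ℝ => κ * Real.exp (μ * t) - c * Real.exp (ν * t))
          (κ * (Real.exp (μ * t) * μ) - c * (Real.exp (ν * t) * ν)) t := by
        intro t
        have h1 : HasDerivAt (fun t : ℝ => μ * t) μ t := by
          simpa using (hasDerivAt_id t).const_mul μ
        have h2 : HasDerivAt (fun t : ℝ => ν * t) ν t := by
          simpa using (hasDerivAt_id t).const_mul ν
        exact ((h1.exp.const_mul κ).sub (h2.exp.const_mul c))
      apply monotoneOn_of_deriv_nonneg (convex_Iic 0)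
      · exact fun t _ => (hder t).continuousAt.continuousWithinAt
      · intro t ht
        exact (hder t).differentiableAt.differentiableWithinAt
      · intro t ht
        rw [(hder t).deriv]
        have ht0 : t < 0 := by simpa using ht
        have hcv : c * ν = μ * κ := by
          rw [hc_def]; field_simp
        have hee : Real.exp (ν * t) ≤ Real.exp (μ * t) := by
          apply Real.exp_le_exp.2
          nlinarith
        have h4 : c * (Real.exp (ν * t) * ν) = μ * κ * Real.exp (ν * t) := by
          linear_combination Real.exp (ν * t) * hcv
        have h5 := mul_le_mul_of_nonneg_left hee (by positivity : (0:ℝ) ≤ μ * κ)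
        linarith
    -- pieces
    have m1 : ∀ a b : ℝ, a ≤ b → b ≤ -s → g a ≤ g b := by
      intro a b hab hb
      rw [hg1 a (hab.trans hb), hg1 b hb]
      have h1 : (1 : ℝ) ≤ Real.exp (lam * s) := by
        rw [← Real.exp_zero]; exact Real.exp_le_exp.2 (by nlinarith)
      have h2 : Real.exp (ν * a) ≤ Real.exp (ν * b) := by
        exact Real.exp_le_exp.2 (by nlinarith)
      have := mul_le_mul_of_nonneg_left h2
        (by nlinarith : (0:ℝ) ≤ c * (Real.exp (lam * s) - 1))
      linarith
    have m2 : ∀ a b : ℝ, -s ≤ a → a ≤ b → b ≤ 0 → g a ≤ g b := by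
      intro a b ha hab hb
      rw [hg2 a ha (hab.trans hb), hg2 b (ha.trans hab) hb]
      have := hmid (Set.mem_Iic.2 (hab.trans hb)) (Set.mem_Iic.2 hb) hab
      simp only at this
      linarith
    have m3 : ∀ a b : ℝ, 0 ≤ a → a ≤ b → g a ≤ g b := by
      intro a b ha hab
      rw [hg3 a ha, hg3 b (ha.trans hab)]
    intro a b hab
    show g a ≤ g b
    have hs0 : -s ≤ (0 : ℝ) := by linarith
    rcases le_or_gt b (-s) with hb | hb
    · exact m1 a b hab hb
    · rcases le_or_gt b 0 with hb0 | hb0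
      · rcases le_or_gt a (-s) with ha | ha
        · exact (m1 a (-s) ha le_rfl).trans (m2 (-s) b le_rfl hb.le hb0)
        · exact m2 a b ha.le hab hb0
      · rcases le_or_gt a 0 with ha0 | ha0
        · rcases le_or_gt a (-s) with ha | ha
          · exact ((m1 a (-s) ha le_rfl).trans (m2 (-s) 0 le_rfl hs0 le_rfl)).trans
              (m3 0 b le_rfl hb0.le)
          · exact (m2 a 0 ha.le ha0 le_rfl).trans (m3 0 b le_rfl hb0.le)
        · exact m3 a b ha0.le hab
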